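/- Let a, b > 0 and let S be a segment with endpoints (x₁,y₁), (x₂,y₂) whose discrete bounding rectangle has normalized dimensions i, j with i ≥ 1 and j ≥ 1. Then the number of tiles of the a×b grid visited by S equals i + j − 1 if and only if S contains no grid point (k·a, l·b) with integers k, l satisfying ⌊min(x₁,x₂)/a⌋ < k < ⌈max(x₁,x₂)/a⌉ and ⌊min(y₁,y₂)/b⌋ < l < ⌈max(y₁,y₂)/b⌉ (i.e., no grid point in the interior of the discrete bounding rectangle). -/

import Mathlib

open Set

/-- Interior of the tile `T(k,l)` of the `a×b` grid. -/
noncomputable def tileInt (a b : ℝ) (k l : ℤ) : Set (ℝ × ℝ) :=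
  Set.Ioo ((k : ℝ) * a) (((k : ℝ) + 1) * a) ×ˢ Set.Ioo ((l : ℝ) * b) (((l : ℝ) + 1) * b)

/-- Number of tiles of the `a×b` grid visited by the closed segment with endpoints `p`, `q`. -/
noncomputable def visitCount (a b : ℝ) (p q : ℝ × ℝ) : ℕ :=
  Set.ncard {kl : ℤ × ℤ | (segment ℝ p q ∩ tileInt a b kl.1 kl.2).Nonempty}

/-- Normalized width of the discrete bounding rectangle of the segment with endpoints `p`, `q`. -/
noncomputable def normWidth (a : ℝ) (p q : ℝ × ℝ) : ℤ :=
  ⌈max p.1 q.1 / a⌉ - ⌊min p.1 q.1 / a⌋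

/-- Normalized height of the discrete bounding rectangle of the segment with endpoints `p`, `q`. -/
noncomputable def normHeight (b : ℝ) (p q : ℝ × ℝ) : ℤ :=
  ⌈max p.2 q.2 / b⌉ - ⌊min p.2 q.2 / b⌋

/-- Euclidean length of the segment with endpoints `p`, `q`. -/
noncomputable def segLen (p q : ℝ × ℝ) : ℝ :=
  Real.sqrt ((p.1 - q.1) ^ 2 + (p.2 - q.2) ^ 2)

/-- `maxTiles a b ℓ` : maximum number of tiles of the `a×b` grid visited by a segment of length `ℓ`. -/
noncomputable def maxTiles (a b ℓ : ℝ) : ℕ :=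
  sSup {n : ℕ | ∃ p q : ℝ × ℝ, segLen p q = ℓ ∧ visitCount a b p q = n}

/-- `infLen a b N` : infimum of lengths of segments visiting at least `N` tiles of the `a×b` grid. -/
noncomputable def infLen (a b : ℝ) (N : ℕ) : ℝ :=
  sInf {ℓ : ℝ | 0 < ℓ ∧ ∃ p q : ℝ × ℝ, segLen p q = ℓ ∧ N ≤ visitCount a b p q}

/-- `minIntLen N` : minimum positive integer length of a segment visiting at least `N` tiles
of the unit square grid. -/
noncomputable def minIntLen (N : ℕ) : ℕ :=
  sInf {L : ℕ | 1 ≤ L ∧ ∃ p q : ℝ × ℝ, segLen p q = (L : ℝ) ∧ N ≤ visitCount 1 1 p q}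

namespace GridAux

def Stmt (a b : ℝ) (p q : ℝ × ℝ) : Prop :=
  (visitCount a b p q : ℤ) = normWidth a p q + normHeight b p q - 1 ↔
      ∀ k l : ℤ, ⌊min p.1 q.1 / a⌋ < k → k < ⌈max p.1 q.1 / a⌉ →
        ⌊min p.2 q.2 / b⌋ < l → l < ⌈max p.2 q.2 / b⌉ →
        ((k : ℝ) * a, (l : ℝ) * b) ∉ segment ℝ p q

lemma mem_tile {a b : ℝ} {z : ℝ × ℝ} {k l : ℤ} :
    z ∈ tileInt a b k l ↔
      ((k : ℝ) * a < z.1 ∧ z.1 < ((k : ℝ) + 1) * a) ∧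
      ((l : ℝ) * b < z.2 ∧ z.2 < ((l : ℝ) + 1) * b) := by
  simp [tileInt, Set.mem_prod]

lemma seg_pt {p q : ℝ × ℝ} {t : ℝ} (h0 : 0 ≤ t) (h1 : t ≤ 1) :
    ((1 - t) * p.1 + t * q.1, (1 - t) * p.2 + t * q.2) ∈ segment ℝ p q := by
  rw [segment_eq_image]
  exact ⟨t, ⟨h0, h1⟩, by simp [Prod.ext_iff]⟩

lemma mem_seg {p q z : ℝ × ℝ} :
    z ∈ segment ℝ p q ↔ ∃ t : ℝ, 0 ≤ t ∧ t ≤ 1 ∧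
      z.1 = (1 - t) * p.1 + t * q.1 ∧ z.2 = (1 - t) * p.2 + t * q.2 := by
  constructor
  · intro hz
    rw [segment_eq_image] at hz
    obtain ⟨t, ⟨h0, h1⟩, hzt⟩ := hz
    exact ⟨t, h0, h1, by rw [← hzt]; simp, by rw [← hzt]; simp⟩
  · rintro ⟨t, h0, h1, e1, e2⟩
    have hz : z = ((1 - t) * p.1 + t * q.1, (1 - t) * p.2 + t * q.2) := Prod.ext e1 e2
    rw [hz]; exact seg_pt h0 h1

lemma param_le {c d t s : ℝ} (hcd : c ≤ d) (hts : t ≤ s) :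
    (1 - t) * c + t * d ≤ (1 - s) * c + s * d := by
  nlinarith [mul_nonneg (sub_nonneg.2 hts) (sub_nonneg.2 hcd)]

lemma param_lt {c d t s : ℝ} (hcd : c ≤ d)
    (h : (1 - t) * c + t * d < (1 - s) * c + s * d) : t < s := by
  by_contra hc
  push_neg at hc
  exact absurd (param_le hcd hc) (not_le.2 h)

set_option maxHeartbeats 2000000 in
lemma core {a b : ℝ} (ha : 0 < a) (hb : 0 < b) {p q : ℝ × ℝ}
    (hx : p.1 ≤ q.1) (hy : p.2 ≤ q.2)
    (hi : 1 ≤ normWidth a p q) (hj : 1 ≤ normHeight b p q) :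
    Stmt a b p q := by
  have hmin1 : min p.1 q.1 = p.1 := min_eq_left hx
  have hmax1 : max p.1 q.1 = q.1 := max_eq_right hx
  have hmin2 : min p.2 q.2 = p.2 := min_eq_left hy
  have hmax2 : max p.2 q.2 = q.2 := max_eq_right hy
  set m1 := ⌊p.1 / a⌋ with hm1
  set M1 := ⌈q.1 / a⌉ with hM1
  set m2 := ⌊p.2 / b⌋ with hm2
  set M2 := ⌈q.2 / b⌉ with hM2
  have hW : normWidth a p q = M1 - m1 := by unfold normWidth; rw [hmin1, hmax1]
  have hH : normHeight b p q = M2 - m2 := by unfold normHeight; rw [hmin2, hmax2]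
  rw [hW] at hi; rw [hH] at hj
  have hu0 : (m1 : ℝ) ≤ p.1 / a := Int.floor_le _
  have hu0' : p.1 / a < (m1 : ℝ) + 1 := Int.lt_floor_add_one _
  have hu1 : q.1 / a ≤ (M1 : ℝ) := Int.le_ceil _
  have hu1' : (M1 : ℝ) - 1 < q.1 / a := by
    have := Int.ceil_lt_add_one (q.1 / a); linarith
  have hv0 : (m2 : ℝ) ≤ p.2 / b := Int.floor_le _
  have hv0' : p.2 / b < (m2 : ℝ) + 1 := Int.lt_floor_add_one _
  have hv1 : q.2 / b ≤ (M2 : ℝ) := Int.le_ceil _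
  have hv1' : (M2 : ℝ) - 1 < q.2 / b := by
    have := Int.ceil_lt_add_one (q.2 / b); linarith
  set V : Set (ℤ × ℤ) := {kl : ℤ × ℤ | (segment ℝ p q ∩ tileInt a b kl.1 kl.2).Nonempty}
    with hVdef
  have hvc : visitCount a b p q = V.ncard := rfl
  -- tile membership in divided coordinates
  have tile_iff : ∀ (z : ℝ × ℝ) (k l : ℤ), z ∈ tileInt a b k l ↔
      ((k : ℝ) < z.1 / a ∧ z.1 / a < (k : ℝ) + 1) ∧
      ((l : ℝ) < z.2 / b ∧ z.2 / b < (l : ℝ) + 1) := by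
    intro z k l
    rw [mem_tile, lt_div_iff₀ ha, div_lt_iff₀ ha, lt_div_iff₀ hb, div_lt_iff₀ hb]
  -- segment coordinate bounds
  have seg_bounds : ∀ z ∈ segment ℝ p q, p.1 ≤ z.1 ∧ z.1 ≤ q.1 ∧ p.2 ≤ z.2 ∧ z.2 ≤ q.2 := by
    intro z hz
    obtain ⟨t, h0, h1, e1, e2⟩ := mem_seg.mp hz
    refine ⟨?_, ?_, ?_, ?_⟩ <;> nlinarith [mul_nonneg h0 (sub_nonneg.2 hx),
      mul_nonneg (sub_nonneg.2 h1) (sub_nonneg.2 hx),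
      mul_nonneg h0 (sub_nonneg.2 hy), mul_nonneg (sub_nonneg.2 h1) (sub_nonneg.2 hy)]
  -- no simultaneous strict x-increase / y-decrease
  have noCross : ∀ z ∈ segment ℝ p q, ∀ z' ∈ segment ℝ p q,
      z.1 < z'.1 → z'.2 < z.2 → False := by
    intro z hz z' hz' h1 h2
    obtain ⟨t, t0, t1, e1, e2⟩ := mem_seg.mp hz
    obtain ⟨s, s0, s1, f1, f2⟩ := mem_seg.mp hz'
    rw [e1, f1] at h1
    rw [e2, f2] at h2
    have hts : t < s := param_lt hx h1
    have hst : s < t := param_lt hy h2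
    linarith
  -- L1 : index bounds for visited tiles
  have L1 : ∀ kl : ℤ × ℤ, kl ∈ V → m1 ≤ kl.1 ∧ kl.1 < M1 ∧ m2 ≤ kl.2 ∧ kl.2 < M2 := by
    rintro ⟨k, l⟩ ⟨z, hzs, hzt⟩
    obtain ⟨⟨hk1, hk2⟩, hl1, hl2⟩ := (tile_iff z k l).mp hzt
    obtain ⟨b1, b2, b3, b4⟩ := seg_bounds z hzs
    have d1 : p.1 / a ≤ z.1 / a := by gcongr
    have d2 : z.1 / a ≤ q.1 / a := by gcongr
    have d3 : p.2 / b ≤ z.2 / b := by gcongr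
    have d4 : z.2 / b ≤ q.2 / b := by gcongr
    refine ⟨?_, ?_, ?_, ?_⟩
    · have : (m1 : ℝ) < (k : ℝ) + 1 := by linarith
      have : (m1 : ℝ) < ((k + 1 : ℤ) : ℝ) := by push_cast; linarith
      have := Int.cast_lt.mp this; omega
    · have : (k : ℝ) < (M1 : ℝ) := by linarith
      exact Int.cast_lt.mp this
    · have : (m2 : ℝ) < ((l + 1 : ℤ) : ℝ) := by push_cast; linarith
      have := Int.cast_lt.mp this; omega
    · have : (l : ℝ) < (M2 : ℝ) := by linarith
      exact Int.cast_lt.mp this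
  -- L2 : sum is injective on V
  have L2 : ∀ kl ∈ V, ∀ kl' ∈ V, kl.1 + kl.2 = kl'.1 + kl'.2 → kl = kl' := by
    have main : ∀ k l k' l' : ℤ, (k, l) ∈ V → (k', l') ∈ V → k < k' → l' < l → False := by
      intro k l k' l' hkl hkl' hk hl
      obtain ⟨z, hzs, hzt⟩ := hkl
      obtain ⟨z', hzs', hzt'⟩ := hkl'
      obtain ⟨⟨hk1, hk2⟩, hl1, hl2⟩ := (tile_iff z k l).mp hzt
      obtain ⟨⟨hk1', hk2'⟩, hl1', hl2'⟩ := (tile_iff z' k' l').mp hzt'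
      have c1 : ((k : ℝ) + 1) ≤ (k' : ℝ) := by exact_mod_cast hk
      have c2 : ((l' : ℝ) + 1) ≤ (l : ℝ) := by exact_mod_cast hl
      have e1 : z.1 / a < z'.1 / a := by linarith
      have e2 : z'.2 / b < z.2 / b := by linarith
      exact noCross z hzs z' hzs' (by exact (div_lt_div_iff_of_pos_right ha).mp e1)
        (by exact (div_lt_div_iff_of_pos_right hb).mp e2)
    rintro ⟨k, l⟩ hkl ⟨k', l'⟩ hkl' hsum
    simp only [Prod.mk.injEq]
    rcases lt_trichotomy k k' with h | h | h
    · exact absurd (main k l k' l' hkl hkl' h (by omega)) (by simp)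
    · exact ⟨h, by omega⟩
    · exact absurd (main k' l' k l hkl' hkl h (by omega)) (by simp)
  -- L3 : a grid point on the segment forbids sum (k+l-1)
  have L3 : ∀ k l : ℤ, ((k : ℝ) * a, (l : ℝ) * b) ∈ segment ℝ p q →
      ∀ kl ∈ V, kl.1 + kl.2 ≠ k + l - 1 := by
    rintro k l hg ⟨k', l'⟩ ⟨z, hzs, hzt⟩ hsum
    obtain ⟨⟨hk1, hk2⟩, hl1, hl2⟩ := mem_tile.mp hzt
    obtain ⟨t0, t00, t01, g1, g2⟩ := mem_seg.mp hg
    obtain ⟨t, ht0, ht1, e1, e2⟩ := mem_seg.mp hzs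
    simp only at hk1 hk2 hl1 hl2 hsum g1 g2
    rcases le_total t t0 with h | h
    · have w1 : z.1 ≤ (k : ℝ) * a := by rw [e1, g1]; exact param_le hx h
      have w2 : z.2 ≤ (l : ℝ) * b := by rw [e2, g2]; exact param_le hy h
      have : (k' : ℝ) < (k : ℝ) := by
        have := lt_of_lt_of_le hk1 w1
        exact lt_of_mul_lt_mul_right this (le_of_lt ha)
      have hkk : k' < k := Int.cast_lt.mp this
      have : (l' : ℝ) < (l : ℝ) := by
        have := lt_of_lt_of_le hl1 w2
        exact lt_of_mul_lt_mul_right this (le_of_lt hb)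
      have hll : l' < l := Int.cast_lt.mp this
      omega
    · have w1 : (k : ℝ) * a ≤ z.1 := by rw [e1, g1]; exact param_le hx h
      have w2 : (l : ℝ) * b ≤ z.2 := by rw [e2, g2]; exact param_le hy h
      have : (k : ℝ) < (k' : ℝ) + 1 := by
        have := lt_of_le_of_lt w1 hk2
        exact lt_of_mul_lt_mul_right this (le_of_lt ha)
      have hkk : k < k' + 1 := by exact_mod_cast this
      have : (l : ℝ) < (l' : ℝ) + 1 := by
        have := lt_of_le_of_lt w2 hl2
        exact lt_of_mul_lt_mul_right this (le_of_lt hb)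
      have hll : l < l' + 1 := by exact_mod_cast this
      omega
  -- L4 : surjectivity of the sum under the no-interior-grid-point hypothesis
  have L4 : (∀ k l : ℤ, m1 < k → k < M1 → m2 < l → l < M2 →
        ((k : ℝ) * a, (l : ℝ) * b) ∉ segment ℝ p q) →
      ∀ s : ℤ, m1 + m2 ≤ s → s ≤ M1 + M2 - 2 → ∃ kl ∈ V, kl.1 + kl.2 = s := by
    intro H s hs1 hs2
    have hs1R : (m1 : ℝ) + (m2 : ℝ) ≤ (s : ℝ) := by exact_mod_cast hs1
    have hs2R : (s : ℝ) ≤ (M1 : ℝ) + (M2 : ℝ) - 2 := by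
      have : ((s : ℤ) : ℝ) ≤ ((M1 + M2 - 2 : ℤ) : ℝ) := by exact_mod_cast hs2
      push_cast at this; linarith
    rcases le_or_gt ((s : ℝ) + 1) (p.1 / a + p.2 / b) with hA | hA
    · -- start tile
      have hA1 : (m1 : ℝ) < p.1 / a := by
        rcases lt_or_eq_of_le hu0 with h | h
        · exact h
        · exfalso; rw [← h] at hA; linarith
      have hA2 : (m2 : ℝ) < p.2 / b := by
        rcases lt_or_eq_of_le hv0 with h | h
        · exact h
        · exfalso; rw [← h] at hA; linarith
      have hseq : s = m1 + m2 := by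
        have : (s : ℝ) < (m1 : ℝ) + (m2 : ℝ) + 1 := by linarith
        have : s < m1 + m2 + 1 := by exact_mod_cast this
        omega
      refine ⟨(m1, m2), ⟨p, left_mem_segment ℝ p q, (tile_iff p m1 m2).mpr
        ⟨⟨hA1, hu0'⟩, hA2, hv0'⟩⟩, by omega⟩
    rcases le_or_gt (q.1 / a + q.2 / b) ((s : ℝ) + 1) with hB | hB
    · -- end tile
      have hB1 : q.1 / a < (M1 : ℝ) := by
        rcases lt_or_eq_of_le hu1 with h | h
        · exact h
        · exfalso; rw [h] at hB; linarith
      have hB2 : q.2 / b < (M2 : ℝ) := by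
        rcases lt_or_eq_of_le hv1 with h | h
        · exact h
        · exfalso; rw [h] at hB; linarith
      have hseq : s = M1 + M2 - 2 := by
        have : (M1 : ℝ) + (M2 : ℝ) - 3 < (s : ℝ) := by linarith
        have : M1 + M2 - 3 < s := by exact_mod_cast this
        omega
      refine ⟨(M1 - 1, M2 - 1), ⟨q, right_mem_segment ℝ p q, (tile_iff q (M1-1) (M2-1)).mpr
        ⟨⟨by push_cast; linarith, by push_cast; linarith⟩,
          by push_cast; linarith, by push_cast; linarith⟩⟩, by omega⟩
    · -- interior crossing point
      set w0 := p.1 / a + p.2 / b with hw0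
      set w1 := q.1 / a + q.2 / b with hw1
      have hden : 0 < w1 - w0 := by linarith
      set t := ((s : ℝ) + 1 - w0) / (w1 - w0) with htdef
      have ht0 : 0 < t := div_pos (by linarith) hden
      have ht1 : t < 1 := (div_lt_one hden).mpr (by linarith)
      set z : ℝ × ℝ := ((1 - t) * p.1 + t * q.1, (1 - t) * p.2 + t * q.2) with hzdef
      have hzseg : z ∈ segment ℝ p q := seg_pt (le_of_lt ht0) (le_of_lt ht1)
      have htc : t * (w1 - w0) = (s : ℝ) + 1 - w0 := div_mul_cancel₀ _ (ne_of_gt hden)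
      have hzsum : z.1 / a + z.2 / b = (s : ℝ) + 1 := by
        have e : z.1 / a + z.2 / b = (1 - t) * w0 + t * w1 := by
          rw [hzdef, hw0, hw1]; field_simp; ring
        rw [e]; nlinarith [htc]
      have hz1 : p.1 / a ≤ z.1 / a ∧ z.1 / a ≤ q.1 / a ∧ p.2 / b ≤ z.2 / b ∧ z.2 / b ≤ q.2 / b := by
        obtain ⟨c1, c2, c3, c4⟩ := seg_bounds z hzseg
        exact ⟨by gcongr, by gcongr, by gcongr, by gcongr⟩
      obtain ⟨c1, c2, c3, c4⟩ := hz1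
      set α := z.1 / a with hα
      set β := z.2 / b with hβ
      by_cases hint : (⌊α⌋ : ℝ) = α
      · -- z is a grid point : contradiction with H
        exfalso
        set k0 := ⌊α⌋ with hk0
        set l0 := s + 1 - k0 with hl0
        have hβint : (l0 : ℝ) = β := by rw [hl0]; push_cast; rw [hint]; linarith
        have hzeq : z = ((k0 : ℝ) * a, (l0 : ℝ) * b) := by
          have e1 : z.1 = α * a := by rw [hα]; field_simp
          have e2 : z.2 = β * b := by rw [hβ]; field_simp
          rw [Prod.ext_iff]; exact ⟨by rw [e1, ← hint], by rw [e2, ← hβint]⟩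
        -- strict bounds on k0
        have hk0b : m1 < k0 ∧ k0 < M1 := by
          rcases eq_or_lt_of_le hx with hxe | hxs
          · -- vertical: α = p.1/a is an integer, contradict hi
            exfalso
            have hp1 : p.1 / a = α := by rw [hα, hzdef]; simp; rw [← hxe]; ring_nf
            have hq1 : q.1 / a = α := by rw [hα, hzdef]; simp; rw [← hxe]; ring_nf
            have hm1e : m1 = k0 := by rw [hm1, hp1, ← hint, Int.floor_intCast]
            have hM1e : M1 = k0 := by rw [hM1, hq1, ← hint, Int.ceil_intCast]
            omega
          · have z1p : p.1 < z.1 := by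
              rw [hzdef]; simp only; nlinarith
            have z1q : z.1 < q.1 := by
              rw [hzdef]; simp only; nlinarith
            constructor
            · have : (m1 : ℝ) < (k0 : ℝ) := by
                rw [hint, hα]; calc (m1 : ℝ) ≤ p.1 / a := hu0
                  _ < z.1 / a := by gcongr
              exact_mod_cast this
            · have : (k0 : ℝ) < (M1 : ℝ) := by
                rw [hint, hα]; calc z.1 / a < q.1 / a := by gcongr
                  _ ≤ (M1 : ℝ) := hu1
              exact_mod_cast this
        have hl0b : m2 < l0 ∧ l0 < M2 := by
          rcases eq_or_lt_of_le hy with hye | hys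
          · exfalso
            have hp2 : p.2 / b = β := by rw [hβ, hzdef]; simp; rw [← hye]; ring_nf
            have hq2 : q.2 / b = β := by rw [hβ, hzdef]; simp; rw [← hye]; ring_nf
            have hm2e : m2 = l0 := by rw [hm2, hp2, ← hβint, Int.floor_intCast]
            have hM2e : M2 = l0 := by rw [hM2, hq2, ← hβint, Int.ceil_intCast]
            omega
          · have z2p : p.2 < z.2 := by
              rw [hzdef]; simp only; nlinarith
            have z2q : z.2 < q.2 := by
              rw [hzdef]; simp only; nlinarith
            constructor
            · have : (m2 : ℝ) < (l0 : ℝ) := by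
                rw [hβint, hβ]; calc (m2 : ℝ) ≤ p.2 / b := hv0
                  _ < z.2 / b := by gcongr
              exact_mod_cast this
            · have : (l0 : ℝ) < (M2 : ℝ) := by
                rw [hβint, hβ]; calc z.2 / b < q.2 / b := by gcongr
                  _ ≤ (M2 : ℝ) := hv1
              exact_mod_cast this
        exact H k0 l0 hk0b.1 hk0b.2 hl0b.1 hl0b.2 (hzeq ▸ hzseg)
      · -- z is in a tile interior with index sum s
        have hαlt : (⌊α⌋ : ℝ) < α := lt_of_le_of_ne (Int.floor_le α) hint
        have hβne : (⌊β⌋ : ℝ) ≠ β := by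
          intro h
          apply hint
          have hαv : α = ((s + 1 - ⌊β⌋ : ℤ) : ℝ) := by push_cast; rw [h]; linarith
          rw [hαv, Int.floor_intCast]
        have hβlt : (⌊β⌋ : ℝ) < β := lt_of_le_of_ne (Int.floor_le β) hβne
        have htile : z ∈ tileInt a b ⌊α⌋ ⌊β⌋ :=
          (tile_iff z ⌊α⌋ ⌊β⌋).mpr ⟨⟨hαlt, Int.lt_floor_add_one α⟩, hβlt, Int.lt_floor_add_one β⟩
        have hsum : ⌊α⌋ + ⌊β⌋ = s := by
          have u1 : (⌊α⌋ : ℝ) + (⌊β⌋ : ℝ) < (s : ℝ) + 1 := by linarith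
          have u2 : (s : ℝ) - 1 < (⌊α⌋ : ℝ) + (⌊β⌋ : ℝ) := by
            have a1 : α - 1 < (⌊α⌋ : ℝ) := Int.sub_one_lt_floor α
            have a2 : β - 1 < (⌊β⌋ : ℝ) := Int.sub_one_lt_floor β
            linarith
          have v1 : ⌊α⌋ + ⌊β⌋ < s + 1 := by exact_mod_cast u1
          have v2 : s - 1 < ⌊α⌋ + ⌊β⌋ := by exact_mod_cast u2
          omega
        exact ⟨(⌊α⌋, ⌊β⌋), ⟨z, hzseg, htile⟩, hsum⟩

  -- Finiteness and counting
  have hVfin : V.Finite := by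
    apply Set.Finite.subset (Set.Finite.prod (Set.finite_Icc m1 (M1-1)) (Set.finite_Icc m2 (M2-1)))
    intro kl hkl
    obtain ⟨h1, h2, h3, h4⟩ := L1 kl hkl
    exact ⟨⟨h1, by omega⟩, ⟨h3, by omega⟩⟩
  have hinj : Set.InjOn (fun kl : ℤ × ℤ => kl.1 + kl.2) V := fun x hx' y hy' hxy =>
    L2 x hx' y hy' hxy
  have himgsub : (fun kl : ℤ × ℤ => kl.1 + kl.2) '' V ⊆ Set.Icc (m1+m2) (M1+M2-2) := by
    rintro s ⟨kl, hkl, rfl⟩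
    obtain ⟨h1, h2, h3, h4⟩ := L1 kl hkl
    simp only [Set.mem_Icc]
    exact ⟨by omega, by omega⟩
  have hcard_img : ((fun kl : ℤ × ℤ => kl.1 + kl.2) '' V).ncard = V.ncard :=
    Set.ncard_image_of_injOn hinj
  have hIcc : (Set.Icc (m1+m2) (M1+M2-2)).ncard = (M1+M2-2+1-(m1+m2)).toNat := by
    rw [← Finset.coe_Icc, Set.ncard_coe_finset, Int.card_Icc]
  unfold Stmt
  rw [hmin1, hmax1, hmin2, hmax2, hW, hH, hvc, ← hm1, ← hM1, ← hm2, ← hM2]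
  constructor
  · intro hcount k l hk1 hk2 hl1 hl2 hmem
    exfalso
    have hxIcc : k + l - 1 ∈ Set.Icc (m1+m2) (M1+M2-2) := ⟨by omega, by omega⟩
    have hsub2 : (fun kl : ℤ × ℤ => kl.1 + kl.2) '' V ⊆
        Set.Icc (m1+m2) (M1+M2-2) \ {k+l-1} := by
      rintro s ⟨kl, hkl, rfl⟩
      exact ⟨himgsub ⟨kl, hkl, rfl⟩, by simpa using L3 k l hmem kl hkl⟩
    have hle : ((fun kl : ℤ × ℤ => kl.1 + kl.2) '' V).ncard ≤
        (Set.Icc (m1+m2) (M1+M2-2) \ {k+l-1}).ncard :=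
      Set.ncard_le_ncard hsub2 ((Set.finite_Icc _ _).diff)
    have hdiff : (Set.Icc (m1+m2) (M1+M2-2) \ {k+l-1}).ncard =
        (Set.Icc (m1+m2) (M1+M2-2)).ncard - 1 :=
      Set.ncard_diff_singleton_of_mem hxIcc
    rw [hcard_img] at hle
    rw [hdiff, hIcc] at hle
    omega
  · intro H
    have himg : (fun kl : ℤ × ℤ => kl.1 + kl.2) '' V = Set.Icc (m1+m2) (M1+M2-2) := by
      apply Set.Subset.antisymm himgsub
      intro s hs
      obtain ⟨kl, hkl, hsum⟩ := L4 H s hs.1 hs.2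
      exact ⟨kl, hkl, hsum⟩
    have : V.ncard = (M1+M2-2+1-(m1+m2)).toNat := by
      rw [← hcard_img, himg, hIcc]
    omega





lemma normWidth_comm {a : ℝ} (p q : ℝ × ℝ) : normWidth a q p = normWidth a p q := by
  unfold normWidth; rw [min_comm, max_comm]

lemma normHeight_comm {b : ℝ} (p q : ℝ × ℝ) : normHeight b q p = normHeight b p q := by
  unfold normHeight; rw [min_comm, max_comm]

lemma stmt_swap {a b : ℝ} {p q : ℝ × ℝ} (h : Stmt a b q p) : Stmt a b p q := by
  unfold Stmt at h ⊢
  have e1 : segment ℝ q p = segment ℝ p q := segment_symm ℝ q p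
  have e2 : visitCount a b q p = visitCount a b p q := by
    unfold visitCount; rw [e1]
  simp only [e1, e2, normWidth_comm, normHeight_comm,
    min_comm q.1 p.1, max_comm q.1 p.1, min_comm q.2 p.2, max_comm q.2 p.2] at h
  exact h

lemma seg_reflect {p q z : ℝ × ℝ} :
    z ∈ segment ℝ p q ↔ ((z.1, -z.2) : ℝ × ℝ) ∈ segment ℝ (p.1, -p.2) (q.1, -q.2) := by
  rw [mem_seg, mem_seg]
  constructor
  · rintro ⟨t, h0, h1, e1, e2⟩
    refine ⟨t, h0, h1, by simpa using e1, ?_⟩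
    show -z.2 = (1 - t) * (-p.2) + t * (-q.2)
    rw [e2]; ring
  · rintro ⟨t, h0, h1, e1, e2⟩
    refine ⟨t, h0, h1, by simpa using e1, ?_⟩
    have e2' : -z.2 = (1 - t) * (-p.2) + t * (-q.2) := e2
    have : z.2 = -((1 - t) * (-p.2) + t * (-q.2)) := by linarith
    rw [this]; ring

lemma tile_reflect {a b : ℝ} {z : ℝ × ℝ} {k l : ℤ} :
    ((z.1, -z.2) : ℝ × ℝ) ∈ tileInt a b k l ↔ z ∈ tileInt a b k (-l - 1) := by
  rw [mem_tile, mem_tile]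
  push_cast
  constructor
  · rintro ⟨hx', hy1, hy2⟩
    exact ⟨hx', by constructor <;> linarith⟩
  · rintro ⟨hx', hy1, hy2⟩
    exact ⟨hx', by constructor <;> linarith⟩

lemma visit_reflect {a b : ℝ} (p q : ℝ × ℝ) :
    visitCount a b (p.1, -p.2) (q.1, -q.2) = visitCount a b p q := by
  unfold visitCount
  have key : ∀ k l : ℤ, (segment ℝ (p.1, -p.2) (q.1, -q.2) ∩ tileInt a b k l).Nonempty ↔
      (segment ℝ p q ∩ tileInt a b k (-l - 1)).Nonempty := by
    intro k l
    constructor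
    · rintro ⟨z, hzs, hzt⟩
      refine ⟨(z.1, -z.2), ?_, ?_⟩
      · exact seg_reflect.mpr (by simpa using hzs)
      · exact (tile_reflect (z := (z.1, -z.2))).mp (by simpa using hzt)
    · rintro ⟨z, hzs, hzt⟩
      exact ⟨(z.1, -z.2), seg_reflect.mp hzs, tile_reflect.mpr hzt⟩
  have himg : {kl : ℤ × ℤ | (segment ℝ (p.1, -p.2) (q.1, -q.2) ∩ tileInt a b kl.1 kl.2).Nonempty}
      = (fun kl : ℤ × ℤ => (kl.1, -kl.2 - 1)) ''
        {kl : ℤ × ℤ | (segment ℝ p q ∩ tileInt a b kl.1 kl.2).Nonempty} := by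
    ext ⟨k, l⟩
    simp only [Set.mem_setOf_eq, Set.mem_image]
    rw [key k l]
    constructor
    · intro h
      exact ⟨(k, -l - 1), h, by simp [Prod.ext_iff]; try ring⟩
    · rintro ⟨⟨k', l'⟩, h, heq⟩
      simp only [Prod.mk.injEq] at heq
      obtain ⟨hk, hl⟩ := heq
      have : k' = k ∧ l' = -l - 1 := by omega
      rw [this.1, this.2] at h
      exact h
  rw [himg, Set.ncard_image_of_injective _ (by
    rintro ⟨k, l⟩ ⟨k', l'⟩ h
    simp only [Prod.mk.injEq] at h ⊢
    omega)]

lemma normHeight_reflect {b : ℝ} (p q : ℝ × ℝ) :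
    normHeight b (p.1, -p.2) (q.1, -q.2) = normHeight b p q := by
  unfold normHeight
  show ⌈max (-p.2) (-q.2) / b⌉ - ⌊min (-p.2) (-q.2) / b⌋ = _
  rw [min_neg_neg, max_neg_neg, neg_div, neg_div, Int.ceil_neg, Int.floor_neg]
  ring

lemma stmt_reflect {a b : ℝ} {p q : ℝ × ℝ}
    (h : Stmt a b (p.1, -p.2) (q.1, -q.2)) : Stmt a b p q := by
  unfold Stmt at h ⊢
  rw [visit_reflect, normHeight_reflect] at h
  have hw : normWidth a ((p.1, -p.2) : ℝ × ℝ) ((q.1, -q.2) : ℝ × ℝ) = normWidth a p q := rfl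
  rw [hw] at h
  have e3 : ⌊min ((p.1, -p.2) : ℝ × ℝ).2 ((q.1, -q.2) : ℝ × ℝ).2 / b⌋ = -⌈max p.2 q.2 / b⌉ := by
    show ⌊min (-p.2) (-q.2) / b⌋ = _
    rw [min_neg_neg, neg_div, Int.floor_neg]
  have e4 : ⌈max ((p.1, -p.2) : ℝ × ℝ).2 ((q.1, -q.2) : ℝ × ℝ).2 / b⌉ = -⌊min p.2 q.2 / b⌋ := by
    show ⌈max (-p.2) (-q.2) / b⌉ = _
    rw [max_neg_neg, neg_div, Int.ceil_neg]
  rw [h]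
  constructor
  · intro H k l hk1 hk2 hl1 hl2 hmem
    refine H k (-l) hk1 hk2 (by rw [e3]; omega) (by rw [e4]; omega) ?_
    have hm := seg_reflect (z := (((k : ℝ) * a, (l : ℝ) * b) : ℝ × ℝ)).mp hmem
    have ec : (((-l : ℤ) : ℝ)) * b = -((l : ℝ) * b) := by push_cast; ring
    rw [show ((((-l : ℤ) : ℝ)) * b) = -((l : ℝ) * b) from ec]
    exact hm
  · intro H k l hk1 hk2 hl1 hl2 hmem
    rw [e3] at hl1; rw [e4] at hl2
    refine H k (-l) hk1 hk2 (by omega) (by omega) ?_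
    have hmem' : (((((k : ℝ) * a, -((l : ℝ) * b)) : ℝ × ℝ).1,
        -((((k : ℝ) * a, -((l : ℝ) * b)) : ℝ × ℝ).2)) : ℝ × ℝ) ∈
        segment ℝ (p.1, -p.2) (q.1, -q.2) := by simpa using hmem
    have hm := (seg_reflect (z := (((k : ℝ) * a, -((l : ℝ) * b)) : ℝ × ℝ))).mpr hmem'
    have ec : (((-l : ℤ) : ℝ)) * b = -((l : ℝ) * b) := by push_cast; ring
    rw [show ((((-l : ℤ) : ℝ)) * b) = -((l : ℝ) * b) from ec]
    exact hm

lemma key_all {a b : ℝ} (ha : 0 < a) (hb : 0 < b) (p q : ℝ × ℝ)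
    (hi : 1 ≤ normWidth a p q) (hj : 1 ≤ normHeight b p q) : Stmt a b p q := by
  rcases le_total p.1 q.1 with h1 | h1 <;> rcases le_total p.2 q.2 with h2 | h2
  · exact core ha hb h1 h2 hi hj
  · refine stmt_reflect (core ha hb (p := (p.1, -p.2)) (q := (q.1, -q.2)) h1
      (neg_le_neg h2) hi ?_)
    rw [normHeight_reflect]; exact hj
  · refine stmt_swap (stmt_reflect (core ha hb (p := (q.1, -q.2)) (q := (p.1, -p.2)) h1
      (neg_le_neg h2) ?_ ?_))
    · show 1 ≤ normWidth a q p
      rw [normWidth_comm]; exact hi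
    · rw [normHeight_reflect, normHeight_comm]; exact hj
  · refine stmt_swap (core ha hb h1 h2 ?_ ?_)
    · rw [normWidth_comm]; exact hi
    · rw [normHeight_comm]; exact hj

end GridAux

theorem stmt_1 (a b : ℝ) (ha : 0 < a) (hb : 0 < b) (p q : ℝ × ℝ)
    (hi : 1 ≤ normWidth a p q) (hj : 1 ≤ normHeight b p q) :
    (visitCount a b p q : ℤ) = normWidth a p q + normHeight b p q - 1 ↔
      ∀ k l : ℤ, ⌊min p.1 q.1 / a⌋ < k → k < ⌈max p.1 q.1 / a⌉ →
        ⌊min p.2 q.2 / b⌋ < l → l < ⌈max p.2 q.2 / b⌉ →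
        ((k : ℝ) * a, (l : ℝ) * b) ∉ segment ℝ p q :=
  GridAux.key_all ha hb p q hi hj
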